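/- Proposition 4.1, Part B: for every finite sequence of update parameters with all thresholds positive, if the trajectory started at (0,N) is at (x_C*, x_P*) after the n update steps, then after the same n steps there is no trajectory started from a state of S whose position (x_C, x_P) satisfies x_P > x_P*, and no trajectory whose position satisfies x_C > x_C* and x_P > −x_C + (x_C* + x_P*). -/

import Mathlib

/-- The RMM state space `S = {(x_C, x_P) : 0 ≤ x_C ≤ M, 0 ≤ x_P, x_C + x_P ≤ N}`. -/
def RMMState (N M : ℕ) : Set (ℤ × ℤ) :=
  {x | 0 ≤ x.1 ∧ x.1 ≤ (M : ℤ) ∧ 0 ≤ x.2 ∧ x.1 + x.2 ≤ (N : ℤ)}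

/-- The reaction rates `λ₁, λ₂, λ₃, λ₄` (indexed by `Fin 4`, so reaction `Rᵢ` has index `i-1`). -/
noncomputable def RMMrate (k₁ k₂ k₃ k₄ : ℝ) (N M : ℕ) (i : Fin 4) (x : ℤ × ℤ) : ℝ :=
  match i with
  | 0 => k₁ * ((N : ℝ) - (x.1 : ℝ) - (x.2 : ℝ)) * ((M : ℝ) - (x.1 : ℝ))
  | 1 => k₂ * (x.1 : ℝ)
  | 2 => k₃ * (x.1 : ℝ)
  | 3 => k₄ * (x.2 : ℝ) * ((M : ℝ) - (x.1 : ℝ))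

/-- The reaction displacements `R₁ = (1,0)`, `R₂ = (-1,0)`, `R₃ = (-1,1)`, `R₄ = (1,-1)`. -/
def RMMdisp : Fin 4 → ℤ × ℤ
  | 0 => (1, 0)
  | 1 => (-1, 0)
  | 2 => (-1, 1)
  | 3 => (1, -1)

/-- The coupled one-step update `U_{i,t}`: move by `Rᵢ` if `λᵢ(x) ≥ t`, stay put otherwise. -/
noncomputable def RMMupdate (k₁ k₂ k₃ k₄ : ℝ) (N M : ℕ) (i : Fin 4) (t : ℝ)
    (x : ℤ × ℤ) : ℤ × ℤ :=
  if RMMrate k₁ k₂ k₃ k₄ N M i x ≥ t then x + RMMdisp i else x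

/-- Claim-A exclusion region `ψ_A(c,p)`. -/
def psiA (c p : ℤ) : Set (ℤ × ℤ) :=
  {x | x.2 < p} ∪ {x | x.1 < c ∧ x.1 + x.2 ≤ c + p}

/-- Claim-B exclusion region `ψ_B(c,p)`. -/
def psiB (c p : ℤ) : Set (ℤ × ℤ) :=
  {x | x.2 > p} ∪ {x | x.1 > c ∧ x.1 + x.2 > c + p}

/-- The coupled flow: composition of the one-step updates along a list of parameters. -/
noncomputable def RMMflow (k₁ k₂ k₃ k₄ : ℝ) (N M : ℕ) (L : List (Fin 4 × ℝ))
    (x : ℤ × ℤ) : ℤ × ℤ :=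
  L.foldl (fun y q => RMMupdate k₁ k₂ k₃ k₄ N M q.1 q.2 y) x

lemma facPos {k t u v : ℝ} (hk : 0 < k) (ht : 0 < t) (hu : 0 ≤ u) (hv : 0 ≤ v)
    (h : k * u * v ≥ t) : 0 < u ∧ 0 < v := by
  constructor
  · rcases hu.lt_or_eq with h' | h'
    · exact h'
    · exfalso; rw [← h'] at h; simp at h; linarith
  · rcases hv.lt_or_eq with h' | h'
    · exact h'
    · exfalso; rw [← h'] at h; simp at h; linarith

lemma fac1 {k t u : ℝ} (hk : 0 < k) (ht : 0 < t) (h : k * u ≥ t) : 0 < u := by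
  by_contra h'
  push_neg at h'
  nlinarith [mul_nonpos_of_nonneg_of_nonpos hk.le h']

lemma RMMstep (k₁ k₂ k₃ k₄ : ℝ)
    (hk₁ : 0 < k₁) (hk₂ : 0 < k₂) (hk₃ : 0 < k₃) (hk₄ : 0 < k₄)
    (N M : ℕ) (i : Fin 4) (t : ℝ) (ht : 0 < t) (a b : ℤ × ℤ)
    (ha : a ∈ RMMState N M) (hb : b ∈ RMMState N M)
    (h1 : b.2 ≤ a.2) (h2 : b.1 ≤ a.1 ∨ b.1 + b.2 ≤ a.1 + a.2) :
    RMMupdate k₁ k₂ k₃ k₄ N M i t a ∈ RMMState N M ∧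
    RMMupdate k₁ k₂ k₃ k₄ N M i t b ∈ RMMState N M ∧
    (RMMupdate k₁ k₂ k₃ k₄ N M i t b).2 ≤ (RMMupdate k₁ k₂ k₃ k₄ N M i t a).2 ∧
    ((RMMupdate k₁ k₂ k₃ k₄ N M i t b).1 ≤ (RMMupdate k₁ k₂ k₃ k₄ N M i t a).1 ∨
     (RMMupdate k₁ k₂ k₃ k₄ N M i t b).1 + (RMMupdate k₁ k₂ k₃ k₄ N M i t b).2 ≤
       (RMMupdate k₁ k₂ k₃ k₄ N M i t a).1 + (RMMupdate k₁ k₂ k₃ k₄ N M i t a).2) := by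
  obtain ⟨ha1, ha2, ha3, ha4⟩ := ha
  obtain ⟨hb1, hb2, hb3, hb4⟩ := hb
  have ha1' : (0:ℝ) ≤ a.1 := by exact_mod_cast ha1
  have ha2' : (a.1:ℝ) ≤ M := by exact_mod_cast ha2
  have ha3' : (0:ℝ) ≤ a.2 := by exact_mod_cast ha3
  have ha4' : (a.1:ℝ) + a.2 ≤ N := by exact_mod_cast ha4
  have hb1' : (0:ℝ) ≤ b.1 := by exact_mod_cast hb1
  have hb2' : (b.1:ℝ) ≤ M := by exact_mod_cast hb2
  have hb3' : (0:ℝ) ≤ b.2 := by exact_mod_cast hb3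
  have hb4' : (b.1:ℝ) + b.2 ≤ N := by exact_mod_cast hb4
  fin_cases i <;> simp only [RMMupdate] <;>
    split_ifs with hA hB hB <;>
    simp only [RMMrate, RMMdisp, RMMState, Set.mem_setOf_eq,
      Prod.fst_add, Prod.snd_add] at hA hB ⊢
  -- reaction 1, both move
  · have hfa : (0:ℝ) < (N:ℝ) - a.1 - a.2 ∧ (0:ℝ) < (M:ℝ) - a.1 :=
      facPos hk₁ ht (by linarith) (by linarith) hA
    have hfb : (0:ℝ) < (N:ℝ) - b.1 - b.2 ∧ (0:ℝ) < (M:ℝ) - b.1 :=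
      facPos hk₁ ht (by linarith) (by linarith) hB
    have h5 : a.1 + a.2 < N := by
      have : (a.1:ℝ) + a.2 < N := by linarith [hfa.1]
      exact_mod_cast this
    have h6 : a.1 < M := by
      have : (a.1:ℝ) < M := by linarith [hfa.2]
      exact_mod_cast this
    have h7 : b.1 + b.2 < N := by
      have : (b.1:ℝ) + b.2 < N := by linarith [hfb.1]
      exact_mod_cast this
    have h8 : b.1 < M := by
      have : (b.1:ℝ) < M := by linarith [hfb.2]
      exact_mod_cast this
    omega
  -- reaction 1, only a moves
  · have hfa : (0:ℝ) < (N:ℝ) - a.1 - a.2 ∧ (0:ℝ) < (M:ℝ) - a.1 :=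
      facPos hk₁ ht (by linarith) (by linarith) hA
    have h5 : a.1 + a.2 < N := by
      have : (a.1:ℝ) + a.2 < N := by linarith [hfa.1]
      exact_mod_cast this
    have h6 : a.1 < M := by
      have : (a.1:ℝ) < M := by linarith [hfa.2]
      exact_mod_cast this
    omega
  -- reaction 1, only b moves
  · have hfb : (0:ℝ) < (N:ℝ) - b.1 - b.2 ∧ (0:ℝ) < (M:ℝ) - b.1 :=
      facPos hk₁ ht (by linarith) (by linarith) hB
    have h7 : b.1 + b.2 < N := by
      have : (b.1:ℝ) + b.2 < N := by linarith [hfb.1]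
      exact_mod_cast this
    have h8 : b.1 < M := by
      have : (b.1:ℝ) < M := by linarith [hfb.2]
      exact_mod_cast this
    push_neg at hA
    refine ⟨⟨ha1, ha2, ha3, ha4⟩, ⟨by omega, by omega, by omega, by omega⟩, by omega, ?_⟩
    by_contra hcon
    push_neg at hcon
    obtain ⟨hc1, hc2⟩ := hcon
    -- b.1 + 1 > a.1 and b.1 + 1 + b.2 > a.1 + a.2, i.e. b.1 ≥ a.1, b.1+b.2 ≥ a.1+a.2
    have hbc : a.1 ≤ b.1 := by omega
    have hbs : a.1 + a.2 ≤ b.1 + b.2 := by omega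
    rcases h2 with h2 | h2
    · -- b.1 = a.1, then b.2 = a.2 would follow, a = b, contradiction
      have e1 : b.1 = a.1 := le_antisymm h2 hbc
      have e2 : b.2 = a.2 := by omega
      rw [e1, e2] at hB
      linarith
    · -- sums equal, b.1 ≥ a.1 : rate a ≥ rate b
      have e : b.1 + b.2 = a.1 + a.2 := le_antisymm h2 hbs
      have e' : (b.1:ℝ) + b.2 = (a.1:ℝ) + a.2 := by exact_mod_cast e
      have hc' : (a.1:ℝ) ≤ b.1 := by exact_mod_cast hbc
      have e2 : (N:ℝ) - b.1 - b.2 = (N:ℝ) - a.1 - a.2 := by linarith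
      rw [e2] at hB
      have hnn : (0:ℝ) ≤ k₁ * ((N:ℝ) - a.1 - a.2) := by
        have := hfb.1
        nlinarith
      have := mul_le_mul_of_nonneg_left (show (M:ℝ) - b.1 ≤ (M:ℝ) - a.1 by linarith) hnn
      linarith
  -- reaction 1, neither moves
  · exact ⟨⟨ha1, ha2, ha3, ha4⟩, ⟨hb1, hb2, hb3, hb4⟩, h1, h2⟩
  -- reaction 2, both move
  · have h5 : (0:ℝ) < a.1 := fac1 (by assumption) ht hA
    have h6 : (0:ℝ) < b.1 := fac1 (by assumption) ht hB
    have h5' : 0 < a.1 := by exact_mod_cast h5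
    have h6' : 0 < b.1 := by exact_mod_cast h6
    omega
  -- reaction 2, only a moves
  · have h5 : (0:ℝ) < a.1 := fac1 (by assumption) ht hA
    have h5' : 0 < a.1 := by exact_mod_cast h5
    push_neg at hB
    have h6 : (b.1:ℝ) < a.1 := by
      have := lt_of_lt_of_le hB hA
      exact lt_of_mul_lt_mul_left this (by positivity)
    have h6' : b.1 < a.1 := by exact_mod_cast h6
    omega
  -- reaction 2, only b moves
  · have h6 : (0:ℝ) < b.1 := fac1 (by assumption) ht hB
    have h6' : 0 < b.1 := by exact_mod_cast h6
    omega
  · exact ⟨⟨ha1, ha2, ha3, ha4⟩, ⟨hb1, hb2, hb3, hb4⟩, h1, h2⟩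
  -- reaction 3, both move
  · have h5 : (0:ℝ) < a.1 := fac1 (by assumption) ht hA
    have h6 : (0:ℝ) < b.1 := fac1 (by assumption) ht hB
    have h5' : 0 < a.1 := by exact_mod_cast h5
    have h6' : 0 < b.1 := by exact_mod_cast h6
    omega
  -- reaction 3, only a moves
  · have h5 : (0:ℝ) < a.1 := fac1 (by assumption) ht hA
    have h5' : 0 < a.1 := by exact_mod_cast h5
    push_neg at hB
    have h6 : (b.1:ℝ) < a.1 := by
      have := lt_of_lt_of_le hB hA
      exact lt_of_mul_lt_mul_left this (by positivity)
    have h6' : b.1 < a.1 := by exact_mod_cast h6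
    omega
  -- reaction 3, only b moves
  · have h6 : (0:ℝ) < b.1 := fac1 (by assumption) ht hB
    have h6' : 0 < b.1 := by exact_mod_cast h6
    push_neg at hA
    have h7 : (a.1:ℝ) < b.1 := by
      have := lt_of_lt_of_le hA hB
      exact lt_of_mul_lt_mul_left this (by positivity)
    have h7' : a.1 < b.1 := by exact_mod_cast h7
    omega
  · exact ⟨⟨ha1, ha2, ha3, ha4⟩, ⟨hb1, hb2, hb3, hb4⟩, h1, h2⟩
  -- reaction 4, both move
  · have hfa : (0:ℝ) < (a.2:ℝ) ∧ (0:ℝ) < (M:ℝ) - a.1 :=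
      facPos hk₄ ht (by linarith) (by linarith) hA
    have hfb : (0:ℝ) < (b.2:ℝ) ∧ (0:ℝ) < (M:ℝ) - b.1 :=
      facPos hk₄ ht (by linarith) (by linarith) hB
    have h5 : 0 < a.2 := by exact_mod_cast hfa.1
    have h6 : a.1 < M := by
      have : (a.1:ℝ) < M := by linarith [hfa.2]
      exact_mod_cast this
    have h7 : 0 < b.2 := by exact_mod_cast hfb.1
    have h8 : b.1 < M := by
      have : (b.1:ℝ) < M := by linarith [hfb.2]
      exact_mod_cast this
    omega
  -- reaction 4, only a moves
  · have hfa : (0:ℝ) < (a.2:ℝ) ∧ (0:ℝ) < (M:ℝ) - a.1 :=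
      facPos hk₄ ht (by linarith) (by linarith) hA
    have h5 : 0 < a.2 := by exact_mod_cast hfa.1
    have h6 : a.1 < M := by
      have : (a.1:ℝ) < M := by linarith [hfa.2]
      exact_mod_cast this
    push_neg at hB
    refine ⟨⟨by omega, by omega, by omega, by omega⟩, ⟨hb1, hb2, hb3, hb4⟩, ?_, ?_⟩
    · -- need b.2 ≤ a.2 - 1, i.e. b.2 < a.2
      by_contra hcon
      push_neg at hcon
      have e2 : b.2 = a.2 := by omega
      -- then rate b = k₄ a.2 (M - b.1) < t ≤ k₄ a.2 (M - a.1), so a.1 < b.1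
      have e2' : (b.2:ℝ) = a.2 := by exact_mod_cast e2
      have hlt : (a.1:ℝ) < b.1 := by
        rw [e2'] at hB
        have hmul : k₄ * (a.2:ℝ) * ((M:ℝ) - b.1) < k₄ * (a.2:ℝ) * ((M:ℝ) - a.1) :=
          lt_of_lt_of_le hB hA
        have hk0 : (0:ℝ) < k₄ * (a.2:ℝ) := by nlinarith [hfa.1]
        by_contra hno
        push_neg at hno
        have : k₄ * (a.2:ℝ) * ((M:ℝ) - a.1) ≤ k₄ * (a.2:ℝ) * ((M:ℝ) - b.1) :=
          mul_le_mul_of_nonneg_left (by linarith) hk0.le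
        linarith
      have hlt' : a.1 < b.1 := by exact_mod_cast hlt
      rcases h2 with h2 | h2 <;> omega
    · omega
  -- reaction 4, only b moves
  · have hfb : (0:ℝ) < (b.2:ℝ) ∧ (0:ℝ) < (M:ℝ) - b.1 :=
      facPos hk₄ ht (by linarith) (by linarith) hB
    have h7 : 0 < b.2 := by exact_mod_cast hfb.1
    have h8 : b.1 < M := by
      have : (b.1:ℝ) < M := by linarith [hfb.2]
      exact_mod_cast this
    push_neg at hA
    refine ⟨⟨ha1, ha2, ha3, ha4⟩, ⟨by omega, by omega, by omega, by omega⟩, by omega, ?_⟩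
    by_contra hcon
    push_neg at hcon
    obtain ⟨hc1, hc2⟩ := hcon
    -- b.1 + 1 > a.1 and b.1+b.2 > a.1+a.2 (sum unchanged)
    rcases h2 with h2 | h2
    · have e1 : b.1 = a.1 := by omega
      -- then rate b ≤ rate a < t, contradiction
      have e1' : (b.1:ℝ) = a.1 := by exact_mod_cast e1
      have hb2a : (b.2:ℝ) ≤ a.2 := by exact_mod_cast h1
      rw [e1'] at hB
      have hk2a : k₄ * (b.2:ℝ) ≤ k₄ * (a.2:ℝ) := mul_le_mul_of_nonneg_left hb2a hk₄.le
      have hv : (0:ℝ) ≤ (M:ℝ) - a.1 := by linarith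
      have := mul_le_mul_of_nonneg_right hk2a hv
      linarith
    · omega
  · exact ⟨⟨ha1, ha2, ha3, ha4⟩, ⟨hb1, hb2, hb3, hb4⟩, h1, h2⟩

lemma RMMflow_inv (k₁ k₂ k₃ k₄ : ℝ)
    (hk₁ : 0 < k₁) (hk₂ : 0 < k₂) (hk₃ : 0 < k₃) (hk₄ : 0 < k₄) (N M : ℕ) :
    ∀ (L : List (Fin 4 × ℝ)), (∀ q ∈ L, 0 < q.2) → ∀ a b : ℤ × ℤ,
      a ∈ RMMState N M → b ∈ RMMState N M → b.2 ≤ a.2 →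
      (b.1 ≤ a.1 ∨ b.1 + b.2 ≤ a.1 + a.2) →
      (RMMflow k₁ k₂ k₃ k₄ N M L b).2 ≤ (RMMflow k₁ k₂ k₃ k₄ N M L a).2 ∧
      ((RMMflow k₁ k₂ k₃ k₄ N M L b).1 ≤ (RMMflow k₁ k₂ k₃ k₄ N M L a).1 ∨
       (RMMflow k₁ k₂ k₃ k₄ N M L b).1 + (RMMflow k₁ k₂ k₃ k₄ N M L b).2 ≤
         (RMMflow k₁ k₂ k₃ k₄ N M L a).1 + (RMMflow k₁ k₂ k₃ k₄ N M L a).2) := by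
  intro L
  induction L with
  | nil =>
    intro _ a b _ _ h1 h2
    simpa [RMMflow] using ⟨h1, h2⟩
  | cons q L ih =>
    intro hL a b ha hb h1 h2
    have hq : 0 < q.2 := hL q List.mem_cons_self
    obtain ⟨ha', hb', h1', h2'⟩ :=
      RMMstep k₁ k₂ k₃ k₄ hk₁ hk₂ hk₃ hk₄ N M q.1 q.2 hq a b ha hb h1 h2
    have := ih (fun r hr => hL r (List.mem_cons_of_mem q hr))
      (RMMupdate k₁ k₂ k₃ k₄ N M q.1 q.2 a) (RMMupdate k₁ k₂ k₃ k₄ N M q.1 q.2 b)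
      ha' hb' h1' h2'
    simpa [RMMflow, List.foldl_cons] using this



/-- Proposition 4.1, Part B: if the trajectory started at `(0,N)` is at `(x_C*, x_P*)` after
the update steps, then no trajectory started in `S` has `x_P > x_P*`, and none has
`x_C > x_C*` together with `x_P > -x_C + (x_C* + x_P*)`. -/
theorem prop41B (k₁ k₂ k₃ k₄ : ℝ)
    (hk₁ : 0 < k₁) (hk₂ : 0 < k₂) (hk₃ : 0 < k₃) (hk₄ : 0 < k₄)
    (N M : ℕ) (hM : 1 ≤ M) (hMN : M ≤ N)
    (L : List (Fin 4 × ℝ)) (hL : ∀ q ∈ L, 0 < q.2)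
    (xC xP : ℤ) (hB : RMMflow k₁ k₂ k₃ k₄ N M L (0, (N : ℤ)) = (xC, xP))
    (y : ℤ × ℤ) (hy : y ∈ RMMState N M) :
    ¬ ((RMMflow k₁ k₂ k₃ k₄ N M L y).2 > xP) ∧
    ¬ ((RMMflow k₁ k₂ k₃ k₄ N M L y).1 > xC ∧
        (RMMflow k₁ k₂ k₃ k₄ N M L y).2 >
          -(RMMflow k₁ k₂ k₃ k₄ N M L y).1 + (xC + xP)) := by
  have ha0 : ((0 : ℤ), (N : ℤ)) ∈ RMMState N M := by
    refine ⟨le_refl 0, ?_, ?_, ?_⟩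
    · show (0 : ℤ) ≤ (M : ℤ); exact_mod_cast Nat.zero_le M
    · show (0 : ℤ) ≤ (N : ℤ); exact_mod_cast Nat.zero_le N
    · show (0 : ℤ) + (N : ℤ) ≤ (N : ℤ); omega
  obtain ⟨hy1, hy2, hy3, hy4⟩ := hy
  have hinv := RMMflow_inv k₁ k₂ k₃ k₄ hk₁ hk₂ hk₃ hk₄ N M L hL
    ((0 : ℤ), (N : ℤ)) y ha0 ⟨hy1, hy2, hy3, hy4⟩
    (show y.2 ≤ (N : ℤ) by omega)
    (Or.inr (show y.1 + y.2 ≤ (0 : ℤ) + (N : ℤ) by omega))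
  rw [hB] at hinv
  obtain ⟨h1, h2⟩ := hinv
  constructor
  · omega
  · rcases h2 with h2 | h2 <;> omega
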